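/- For every positive integer k there exists a 1-sided 2-layer fan-bundle-planar bipartite graph with n = 3k+2 vertices and exactly (5n−7)/3 = 5k+1 edges, namely the graph obtained by chaining k copies of K_{2,3} so that consecutive copies share an edge. -/

import Mathlib

open Set

noncomputable section

/-! ### Drawings of simple graphs in the plane.

A drawing maps vertices to distinct points of `ℝ²` and each edge to a simple continuous
arc joining the images of its endpoints, such that no arc passes through the image of a
vertex other than its endpoints, any two arcs intersect in finitely many points, and no
two arcs of edges sharing an endpoint cross (they may meet only at shared endpoints). -/

structure Drawing {V : Type} (G : SimpleGraph V) where
  pos : V → ℝ × ℝ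
  pos_inj : Function.Injective pos
  arc : ∀ ⦃u v : V⦄, G.Adj u v → Path (pos u) (pos v)
  arc_symm : ∀ ⦃u v : V⦄ (h : G.Adj u v), arc h.symm = (arc h).symm
  arc_inj : ∀ ⦃u v : V⦄ (h : G.Adj u v), Function.Injective ⇑(arc h)
  arc_avoid : ∀ ⦃u v : V⦄ (h : G.Adj u v) (w : V), w ≠ u → w ≠ v →
    pos w ∉ Set.range ⇑(arc h)
  finite_inter : ∀ ⦃u v x y : V⦄ (h : G.Adj u v) (h' : G.Adj x y), s(u, v) ≠ s(x, y) →
    (Set.range ⇑(arc h) ∩ Set.range ⇑(arc h')).Finite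
  adjacent_no_cross : ∀ ⦃u v x y : V⦄ (h : G.Adj u v) (h' : G.Adj x y), s(u, v) ≠ s(x, y) →
    ¬ Disjoint ({u, v} : Set V) {x, y} →
    Set.range ⇑(arc h) ∩ Set.range ⇑(arc h') ⊆ pos '' (({u, v} : Set V) ∩ {x, y})

/-- The crossings on the arc of the edge `(u,v)`: pairs consisting of a crossing point and
the (necessarily vertex-disjoint) other edge whose arc passes through that point. -/
def Drawing.crossings {V : Type} {G : SimpleGraph V} (D : Drawing G)
    ⦃u v : V⦄ (h : G.Adj u v) : Set ((ℝ × ℝ) × Sym2 V) :=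
  {pe | ∃ (x y : V) (h' : G.Adj x y), pe.2 = s(x, y) ∧ Disjoint ({u, v} : Set V) {x, y} ∧
    pe.1 ∈ Set.range ⇑(D.arc h) ∧ pe.1 ∈ Set.range ⇑(D.arc h')}

/-- A drawing is `k`-planar if every edge arc contains at most `k` crossings. -/
def Drawing.KPlanar {V : Type} {G : SimpleGraph V} (D : Drawing G) (k : ℕ) : Prop :=
  ∀ ⦃u v : V⦄ (h : G.Adj u v), (D.crossings h).ncard ≤ k

/-! ### Fan-bundle drawings. -/

/-- The interior of an arc: its range without the two endpoints. -/
def pathInner {X : Type*} [TopologicalSpace X] {x y : X} (γ : Path x y) : Set X :=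
  Set.range ⇑γ \ {x, y}

/-- A fan-bundle drawing of a graph `G` with fan-bundles indexed by `B`.  Every edge is a
simple arc made of three consecutive parts: two end-segments, each of which either lies in
a fan-bundle anchored at the corresponding endpoint or is trivial, and a middle unbundled
part.  Each fan-bundle `b` is a simple arc from its anchor vertex to its terminal `term b`,
shared as a common initial segment by all edges bundled into it.  Each fan-bundle crosses
at most one other fan-bundle, no two fan-bundles anchored at the same vertex cross, and
the unbundled parts of edges are crossing-free. -/
structure FanBundleDrawing {V : Type} (G : SimpleGraph V) (B : Type) where
  pos : V → ℝ × ℝ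
  pos_inj : Function.Injective pos
  /-- the anchor vertex of each fan-bundle -/
  anchor : B → V
  /-- the terminal point of each fan-bundle -/
  term : B → ℝ × ℝ
  /-- the arc of each fan-bundle, from its anchor to its terminal -/
  bArc : (b : B) → Path (pos (anchor b)) (term b)
  bArc_inj : ∀ b : B, Function.Injective ⇑(bArc b)
  bArc_avoid : ∀ (b : B) (w : V), w ≠ anchor b → pos w ∉ Set.range ⇑(bArc b)
  /-- the fan-bundle (if any) containing the end-segment at `u` of the edge `(u,v)`;
  `none` means this end-segment is trivial -/
  bundleAt : ∀ ⦃u v : V⦄, G.Adj u v → Option B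
  bundleAt_anchor : ∀ ⦃u v : V⦄ (h : G.Adj u v) (b : B), bundleAt h = some b → anchor b = u
  /-- every fan-bundle contains the end-segment of at least one edge -/
  bundle_used : ∀ b : B, ∃ (u v : V) (h : G.Adj u v), bundleAt h = some b
  /-- the middle, unbundled, part of the edge `(u,v)`: it runs from the terminal of the
  fan-bundle at `u` (or from `u` itself if that end-segment is trivial) to the terminal of
  the fan-bundle at `v` (or to `v` itself) -/
  mid : ∀ ⦃u v : V⦄ (h : G.Adj u v),
    Path ((bundleAt h).elim (pos u) term) ((bundleAt h.symm).elim (pos v) term)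
  mid_symm : ∀ ⦃u v : V⦄ (h : G.Adj u v), mid h.symm = (mid h).symm
  mid_inj : ∀ ⦃u v : V⦄ (h : G.Adj u v), Function.Injective ⇑(mid h)
  mid_avoid : ∀ ⦃u v : V⦄ (h : G.Adj u v) (w : V), pos w ∉ pathInner (mid h)
  /-- each fan-bundle crosses at most one other fan-bundle -/
  bundle_cross_at_most_one : ∀ b b₁ b₂ : B,
    b₁ ≠ b → (pathInner (bArc b) ∩ pathInner (bArc b₁)).Nonempty →
    b₂ ≠ b → (pathInner (bArc b) ∩ pathInner (bArc b₂)).Nonempty → b₁ = b₂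
  /-- no two fan-bundles anchored at the same vertex cross -/
  same_anchor_no_cross : ∀ b b' : B, b ≠ b' → anchor b = anchor b' →
    pathInner (bArc b) ∩ pathInner (bArc b') = ∅
  /-- the unbundled parts of edges are crossing-free: they cross neither each other ... -/
  mid_no_cross_mid : ∀ ⦃u v x y : V⦄ (h : G.Adj u v) (h' : G.Adj x y), s(u, v) ≠ s(x, y) →
    pathInner (mid h) ∩ pathInner (mid h') = ∅
  /-- ... nor any fan-bundle -/
  mid_no_cross_bundle : ∀ ⦃u v : V⦄ (h : G.Adj u v) (b : B),
    pathInner (mid h) ∩ pathInner (bArc b) = ∅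

namespace FanBundleDrawing

variable {V : Type} {G : SimpleGraph V} {B : Type}

/-- In a 1-sided fan-bundle drawing, each edge has an end-segment lying in a fan-bundle
anchored at exactly one of its two endpoints; the other end-segment is trivial. -/
def OneSided (D : FanBundleDrawing G B) : Prop :=
  ∀ ⦃u v : V⦄ (h : G.Adj u v), Xor' (D.bundleAt h = none) (D.bundleAt h.symm = none)

/-- In a 2-sided fan-bundle drawing, each end-segment of every edge lies in a fan-bundle
anchored at the corresponding endpoint. -/
def TwoSided (D : FanBundleDrawing G B) : Prop :=
  ∀ ⦃u v : V⦄ (h : G.Adj u v), D.bundleAt h ≠ none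

/-- The set of points of the plane covered by the drawing. -/
def image (D : FanBundleDrawing G B) : Set (ℝ × ℝ) :=
  Set.range D.pos ∪ (⋃ b : B, Set.range ⇑(D.bArc b)) ∪
    ⋃ (u : V) (v : V) (h : G.Adj u v), Set.range ⇑(D.mid h)

/-- A fan-bundle drawing is outer if all vertices are incident to the unbounded face,
i.e. every vertex lies in the closure of the unbounded part of the complement of the
drawing. -/
def Outer (D : FanBundleDrawing G B) : Prop :=
  ∀ v : V, D.pos v ∈
    closure {p : ℝ × ℝ | p ∉ D.image ∧ ¬ Bornology.IsBounded (connectedComponentIn D.imageᶜ p)}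

/-- A fan-bundle drawing is 2-layer if the vertices lie on two distinct parallel
(horizontal, after a suitable rigid motion) lines, adjacent vertices lie on different
lines, and the whole drawing lies in the strip between the two lines. -/
def TwoLayer (D : FanBundleDrawing G B) : Prop :=
  ∃ a b : ℝ, a < b ∧ (∀ v : V, (D.pos v).2 = a ∨ (D.pos v).2 = b) ∧
    (∀ ⦃u v : V⦄, G.Adj u v → (D.pos u).2 ≠ (D.pos v).2) ∧
    D.image ⊆ {p : ℝ × ℝ | a ≤ p.2 ∧ p.2 ≤ b}

/-- The size of a fan-bundle: the number of edges bundled into it. -/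
def size (D : FanBundleDrawing G B) (b : B) : ℕ :=
  {v : V | ∃ h : G.Adj (D.anchor b) v, D.bundleAt h = some b}.ncard

end FanBundleDrawing

def OneSidedFanBundlePlanar {V : Type} (G : SimpleGraph V) : Prop :=
  ∃ (B : Type) (D : FanBundleDrawing G B), D.OneSided

def TwoSidedFanBundlePlanar {V : Type} (G : SimpleGraph V) : Prop :=
  ∃ (B : Type) (D : FanBundleDrawing G B), D.TwoSided

def OneSidedOuterFanBundlePlanar {V : Type} (G : SimpleGraph V) : Prop :=
  ∃ (B : Type) (D : FanBundleDrawing G B), D.OneSided ∧ D.Outer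

def TwoSidedOuterFanBundlePlanar {V : Type} (G : SimpleGraph V) : Prop :=
  ∃ (B : Type) (D : FanBundleDrawing G B), D.TwoSided ∧ D.Outer

def OneSidedTwoLayerFanBundlePlanar {V : Type} (G : SimpleGraph V) : Prop :=
  ∃ (B : Type) (D : FanBundleDrawing G B), D.OneSided ∧ D.TwoLayer

def TwoSidedTwoLayerFanBundlePlanar {V : Type} (G : SimpleGraph V) : Prop :=
  ∃ (B : Type) (D : FanBundleDrawing G B), D.TwoSided ∧ D.TwoLayer

/-- The graph obtained by chaining `k` copies of `K_{2,3}` so that consecutive copies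
share an edge: the `t`-th copy (for `0 ≤ t < k`) is the complete bipartite graph between
the vertices `a_t, a_{t+1}` of the first layer and `b_{2t}, b_{2t+1}, b_{2t+2}` of the
second layer, so that the `t`-th and `(t+1)`-st copies share the edge
`(a_{t+1}, b_{2t+2})`. -/
def chainK23 (k : ℕ) : SimpleGraph (Fin (k + 1) ⊕ Fin (2 * k + 1)) :=
  SimpleGraph.fromRel (fun x y =>
    match x, y with
    | Sum.inl i, Sum.inr j => ∃ t : ℕ, t < k ∧ (i.val = t ∨ i.val = t + 1) ∧
        (j.val = 2 * t ∨ j.val = 2 * t + 1 ∨ j.val = 2 * t + 2)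
    | _, _ => False)

section SegAux

def segP (p q : ℝ × ℝ) : Path p q where
  toFun t := p + (t : ℝ) • (q - p)
  continuous_toFun := continuous_const.add (continuous_subtype_val.smul continuous_const)
  source' := by simp
  target' := by simp

lemma segP_apply (p q : ℝ × ℝ) (t : unitInterval) : segP p q t = p + (t : ℝ) • (q - p) := rfl

lemma segP_range_coord {p q z : ℝ × ℝ} (hz : z ∈ Set.range ⇑(segP p q)) :
    ∃ t : ℝ, 0 ≤ t ∧ t ≤ 1 ∧ z.1 = p.1 + t * (q.1 - p.1) ∧ z.2 = p.2 + t * (q.2 - p.2) := by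
  obtain ⟨t, rfl⟩ := hz
  exact ⟨t, t.2.1, t.2.2, by simp [segP_apply], by simp [segP_apply]⟩

lemma segP_inner_coord {p q z : ℝ × ℝ} (hz : z ∈ pathInner (segP p q)) :
    ∃ t : ℝ, 0 < t ∧ t < 1 ∧ z.1 = p.1 + t * (q.1 - p.1) ∧ z.2 = p.2 + t * (q.2 - p.2) := by
  obtain ⟨⟨t, ht0, ht1⟩, rfl⟩ := hz.1
  have hz2 := hz.2
  refine ⟨t, ht0.lt_of_ne' ?_, ht1.lt_of_ne ?_, by simp [segP_apply], by simp [segP_apply]⟩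
  · rintro rfl
    exact hz2 (by simp [segP_apply])
  · rintro rfl
    apply hz2
    simp [segP_apply]

lemma segP_inj {p q : ℝ × ℝ} (h : p ≠ q) : Function.Injective ⇑(segP p q) := by
  intro a b hab
  have h1 : ((a : ℝ) - b) • (q - p) = 0 := by
    have := hab
    simp only [segP_apply, add_right_inj] at this
    rw [sub_smul, this, sub_self]
  rcases smul_eq_zero.1 h1 with h2 | h2
  · exact Subtype.ext (sub_eq_zero.1 h2)
  · exact absurd (sub_eq_zero.1 h2).symm h

lemma path_symm_range {x y : ℝ × ℝ} (γ : Path x y) : Set.range ⇑γ.symm = Set.range ⇑γ := by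
  have h : ⇑γ.symm = ⇑γ ∘ unitInterval.symm := rfl
  rw [h, Set.range_comp, Function.Surjective.range_eq, Set.image_univ]
  exact unitInterval.symm_involutive.surjective

lemma path_symm_inner {x y : ℝ × ℝ} (γ : Path x y) : pathInner γ.symm = pathInner γ := by
  unfold pathInner
  rw [path_symm_range, Set.pair_comm]

lemma path_symm_inj {x y : ℝ × ℝ} {γ : Path x y} (h : Function.Injective ⇑γ) :
    Function.Injective ⇑γ.symm :=
  h.comp unitInterval.symm_involutive.injective

/-- points in the interior of a "middle" segment (from height 1 down to height 0). -/
lemma mid_inner_coord {c x2 : ℝ} {z : ℝ × ℝ} (hz : z ∈ pathInner (segP (c, 1) (x2, 0))) :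
    0 < z.2 ∧ z.2 < 1 ∧ z.1 = x2 + z.2 * (c - x2) := by
  obtain ⟨t, ht0, ht1, hx, hy⟩ := segP_inner_coord hz
  simp only at hx hy
  constructor
  · nlinarith
  constructor
  · nlinarith
  · rw [hy]; ring_nf; nlinarith [hx]

/-- points in the interior of a "bundle" segment (from height 2 down to height 1). -/
lemma bund_inner_coord {xa c : ℝ} {z : ℝ × ℝ} (hz : z ∈ pathInner (segP (xa, 2) (c, 1))) :
    1 < z.2 ∧ z.2 < 2 ∧ z.1 = c + (z.2 - 1) * (xa - c) := by
  obtain ⟨t, ht0, ht1, hx, hy⟩ := segP_inner_coord hz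
  simp only at hx hy
  refine ⟨by nlinarith, by nlinarith, ?_⟩
  rw [hy]; ring_nf; nlinarith [hx]

end SegAux


section ChainAux

variable {k : ℕ}

lemma chain_not_adj_ll (i i' : Fin (k + 1)) : ¬ (chainK23 k).Adj (.inl i) (.inl i') := by
  intro h
  rw [chainK23, SimpleGraph.fromRel_adj] at h
  exact h.2.elim (fun x => x) (fun x => x)

lemma chain_not_adj_rr (j j' : Fin (2 * k + 1)) : ¬ (chainK23 k).Adj (.inr j) (.inr j') := by
  intro h
  rw [chainK23, SimpleGraph.fromRel_adj] at h
  exact h.2.elim (fun x => x) (fun x => x)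

lemma chain_adj_iff (hk : 1 ≤ k) (i : Fin (k + 1)) (j : Fin (2 * k + 1)) :
    (chainK23 k).Adj (.inl i) (.inr j) ↔ 2 * i.val ≤ j.val + 2 ∧ j.val ≤ 2 * i.val + 2 := by
  rw [chainK23, SimpleGraph.fromRel_adj]
  constructor
  · rintro ⟨-, h | h⟩
    · obtain ⟨t, ht, hi, hj⟩ := h
      omega
    · exact absurd h (fun x => x)
  · rintro ⟨h1, h2⟩
    refine ⟨by simp, Or.inl ?_⟩
    have hj := j.isLt
    have hi := i.isLt
    rcases Nat.lt_or_ge i.val k with hik | hik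
    · rcases le_or_gt j.val (2 * i.val) with hle | hlt
      · exact ⟨i.val - 1 , by omega, by omega, by omega⟩
      · exact ⟨i.val, by omega, by omega, by omega⟩
    · exact ⟨i.val - 1, by omega, by omega, by omega⟩

abbrev VT (k : ℕ) := Fin (k + 1) ⊕ Fin (2 * k + 1)
abbrev BT (k : ℕ) := Fin (k + 1) ⊕ (Fin k ⊕ Fin k)

def posF : VT k → ℝ × ℝ
  | .inl i => (10 * (i.val : ℝ), 2)
  | .inr j => (5 * (j.val : ℝ), 0)

def termF : BT k → ℝ × ℝ
  | .inl s => (10 * (s.val : ℝ), 1)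
  | .inr (.inl t) => (10 * (t.val : ℝ) + 6, 1)
  | .inr (.inr t) => (10 * (t.val : ℝ) + 4, 1)

def anchorF : BT k → VT k
  | .inl s => .inl s
  | .inr (.inl t) => .inl ⟨t.val, by omega⟩
  | .inr (.inr t) => .inl ⟨t.val + 1, by omega⟩

lemma termF_snd (b : BT k) : (termF b).2 = 1 := by
  rcases b with s | (t | t) <;> rfl

lemma posF_anchor_snd (b : BT k) : (posF (anchorF b)).2 = 2 := by
  rcases b with s | (t | t) <;> rfl

def eb (hk : 1 ≤ k) (i : Fin (k + 1)) (j : Fin (2 * k + 1)) : BT k :=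
  if j.val = 2 * i.val then .inl i
  else if 2 * i.val < j.val then .inr (.inl ⟨min i.val (k - 1), by omega⟩)
  else .inr (.inr ⟨i.val - 1, by have := i.isLt; omega⟩)

lemma eb_anchor (hk : 1 ≤ k) (i : Fin (k + 1)) (j : Fin (2 * k + 1)) :
    anchorF (eb hk i j) = .inl i := by
  have hj := j.isLt
  unfold eb
  split_ifs with h1 h2
  · rfl
  · have : i.val < k := by omega
    simp only [anchorF, Sum.inl.injEq]
    exact Fin.ext (by simp; omega)
  · have : 1 ≤ i.val := by omega
    simp only [anchorF, Sum.inl.injEq]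
    exact Fin.ext (by simp; omega)

lemma eb_spec (hk : 1 ≤ k) (i : Fin (k + 1)) (j : Fin (2 * k + 1))
    (h1 : 2 * i.val ≤ j.val + 2) (h2 : j.val ≤ 2 * i.val + 2) :
    ∃ e : ℤ, (termF (eb hk i j)).1 = 5 * (j.val : ℝ) + (e : ℝ) ∧
      ((e = 0 ∧ j.val = 2 * i.val) ∨ (e = 1 ∧ j.val = 2 * i.val + 1) ∨
       (e = -4 ∧ j.val = 2 * i.val + 2) ∨ (e = 4 ∧ j.val + 2 = 2 * i.val) ∨
       (e = -1 ∧ j.val + 1 = 2 * i.val)) := by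
  have hj := j.isLt
  unfold eb
  split_ifs with g1 g2
  · refine ⟨0, ?_, Or.inl ⟨rfl, g1⟩⟩
    simp only [termF]
    push_cast [g1]; ring
  · have hik : i.val < k := by omega
    have hmin : min i.val (k - 1) = i.val := by omega
    rcases Nat.lt_or_ge j.val (2 * i.val + 2) with g3 | g3
    · refine ⟨1, ?_, Or.inr (Or.inl ⟨rfl, by omega⟩)⟩
      simp only [termF, hmin]
      have : j.val = 2 * i.val + 1 := by omega
      push_cast [this]; ring
    · refine ⟨-4, ?_, Or.inr (Or.inr (Or.inl ⟨rfl, by omega⟩))⟩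
      simp only [termF, hmin]
      have : j.val = 2 * i.val + 2 := by omega
      push_cast [this]; ring
  · have hi1 : 1 ≤ i.val := by omega
    rcases Nat.lt_or_ge (j.val + 1) (2 * i.val) with g3 | g3
    · refine ⟨4, ?_, Or.inr (Or.inr (Or.inr (Or.inl ⟨rfl, by omega⟩)))⟩
      simp only [termF]
      have : j.val + 2 = 2 * i.val := by omega
      have treal : (j.val : ℝ) + 2 = 2 * (i.val : ℝ) := by exact_mod_cast this
      push_cast [Nat.cast_sub hi1]
      nlinarith [treal]
    · refine ⟨-1, ?_, Or.inr (Or.inr (Or.inr (Or.inr ⟨rfl, by omega⟩)))⟩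
      simp only [termF]
      have : j.val + 1 = 2 * i.val := by omega
      have treal : (j.val : ℝ) + 1 = 2 * (i.val : ℝ) := by exact_mod_cast this
      push_cast [Nat.cast_sub hi1]
      nlinarith [treal]

def midSeg (hk : 1 ≤ k) (i : Fin (k + 1)) (j : Fin (2 * k + 1)) :
    Path (termF (eb hk i j)) (posF (k := k) (.inr j)) :=
  segP _ _

lemma mid_inner_spec (hk : 1 ≤ k) {i : Fin (k + 1)} {j : Fin (2 * k + 1)} {z : ℝ × ℝ}
    (h1 : 2 * i.val ≤ j.val + 2) (h2 : j.val ≤ 2 * i.val + 2)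
    (hz : z ∈ pathInner (midSeg hk i j)) :
    ∃ e : ℤ, 0 < z.2 ∧ z.2 < 1 ∧ z.1 = 5 * (j.val : ℝ) + z.2 * (e : ℝ) ∧
      ((e = 0 ∧ j.val = 2 * i.val) ∨ (e = 1 ∧ j.val = 2 * i.val + 1) ∨
       (e = -4 ∧ j.val = 2 * i.val + 2) ∨ (e = 4 ∧ j.val + 2 = 2 * i.val) ∨
       (e = -1 ∧ j.val + 1 = 2 * i.val)) := by
  obtain ⟨e, he1, he2⟩ := eb_spec hk i j h1 h2
  have hterm : termF (eb hk i j) = ((termF (eb hk i j)).1, 1) := by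
    rw [← termF_snd (eb hk i j)]
  have hpos : posF (k := k) (.inr j) = (5 * (j.val : ℝ), 0) := rfl
  rw [midSeg, hterm, hpos] at hz
  obtain ⟨hz0, hz1, hzx⟩ := mid_inner_coord hz
  refine ⟨e, hz0, hz1, ?_, he2⟩
  rw [hzx, he1]; ring

lemma mids_disjoint (hk : 1 ≤ k) {i i' : Fin (k + 1)} {j j' : Fin (2 * k + 1)}
    (h1 : 2 * i.val ≤ j.val + 2) (h2 : j.val ≤ 2 * i.val + 2)
    (h1' : 2 * i'.val ≤ j'.val + 2) (h2' : j'.val ≤ 2 * i'.val + 2)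
    (hne : ¬(i = i' ∧ j = j')) :
    pathInner (midSeg hk i j) ∩ pathInner (midSeg hk i' j') = ∅ := by
  ext z
  simp only [Set.mem_inter_iff, Set.mem_empty_iff_false, iff_false, not_and]
  intro hz hz'
  obtain ⟨e, hy0, hy1, hx, hspec⟩ := mid_inner_spec hk h1 h2 hz
  obtain ⟨e', -, -, hx', hspec'⟩ := mid_inner_spec hk h1' h2' hz'
  have hne' : ¬(i.val = i'.val ∧ j.val = j'.val) := by
    rintro ⟨a, b⟩; exact hne ⟨Fin.ext a, Fin.ext b⟩
  have key : (j.val = j'.val ∧ e = e') ∨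
      (5 * (j'.val : ℤ) < 5 * j.val ∧ 5 * (j.val : ℤ) < 5 * j'.val + (e' - e)) ∨
      (5 * (j.val : ℤ) < 5 * j'.val ∧ 5 * (j'.val : ℤ) < 5 * j.val + (e - e')) := by
    have heq : 5 * (j.val : ℝ) + z.2 * (e : ℝ) = 5 * (j'.val : ℝ) + z.2 * (e' : ℝ) := by
      rw [← hx, ← hx']
    rcases lt_trichotomy e e' with hee | hee | hee
    · have heer : (e : ℝ) < (e' : ℝ) := by exact_mod_cast hee
      refine Or.inr (Or.inl ⟨?_, ?_⟩)
      · have : (5 * (j'.val : ℤ) : ℝ) < (5 * (j.val : ℤ) : ℝ) := by push_cast; nlinarith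
        exact_mod_cast this
      · have : (5 * (j.val : ℤ) : ℝ) < ((5 * (j'.val : ℤ) + (e' - e) : ℤ) : ℝ) := by
          push_cast; nlinarith
        exact_mod_cast this
    · subst hee
      refine Or.inl ⟨?_, rfl⟩
      have : (j.val : ℝ) = (j'.val : ℝ) := by nlinarith
      exact_mod_cast this
    · have heer : (e' : ℝ) < (e : ℝ) := by exact_mod_cast hee
      refine Or.inr (Or.inr ⟨?_, ?_⟩)
      · have : (5 * (j.val : ℤ) : ℝ) < (5 * (j'.val : ℤ) : ℝ) := by push_cast; nlinarith
        exact_mod_cast this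
      · have : (5 * (j'.val : ℤ) : ℝ) < ((5 * (j.val : ℤ) + (e - e') : ℤ) : ℝ) := by
          push_cast; nlinarith
        exact_mod_cast this
  omega

def bArcF (b : BT k) : Path (posF (anchorF b)) (termF b) := segP _ _

lemma bund_inner_spec {b : BT k} {z : ℝ × ℝ} (hz : z ∈ pathInner (bArcF b)) :
    1 < z.2 ∧ z.2 < 2 ∧ z.1 = (termF b).1 + (z.2 - 1) * ((posF (anchorF b)).1 - (termF b).1) := by
  have h1 : posF (anchorF b) = ((posF (anchorF b)).1, 2) := by rw [← posF_anchor_snd b]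
  have h2 : termF b = ((termF b).1, 1) := by rw [← termF_snd b]
  rw [bArcF, h1, h2] at hz
  exact bund_inner_coord hz

lemma bund_xcoords (b : BT k) :
    ∃ c f : ℤ, (termF b).1 = (c : ℝ) ∧ (posF (anchorF b)).1 - (termF b).1 = (f : ℝ) ∧
      ((f = 0 ∧ ∃ s : Fin (k + 1), b = .inl s ∧ c = 10 * s.val) ∨
       (f = -6 ∧ ∃ t : Fin k, b = .inr (.inl t) ∧ c = 10 * t.val + 6) ∨
       (f = 6 ∧ ∃ t : Fin k, b = .inr (.inr t) ∧ c = 10 * t.val + 4)) := by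
  rcases b with s | (t | t)
  · exact ⟨10 * s.val, 0, by simp [termF], by simp [termF, anchorF, posF],
      Or.inl ⟨rfl, s, rfl, rfl⟩⟩
  · refine ⟨10 * t.val + 6, -6, by push_cast [termF]; ring, ?_,
      Or.inr (Or.inl ⟨rfl, t, rfl, rfl⟩)⟩
    show (10 : ℝ) * ((⟨t.val, _⟩ : Fin (k+1)).val : ℝ) - (10 * (t.val : ℝ) + 6) = _
    push_cast; ring
  · refine ⟨10 * t.val + 4, 6, by push_cast [termF]; ring, ?_,
      Or.inr (Or.inr ⟨rfl, t, rfl, rfl⟩)⟩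
    show (10 : ℝ) * ((⟨t.val + 1, _⟩ : Fin (k+1)).val : ℝ) - (10 * (t.val : ℝ) + 4) = _
    push_cast; ring

lemma bundle_cross {b b' : BT k} (hne : b ≠ b')
    (hz : (pathInner (bArcF b) ∩ pathInner (bArcF b')).Nonempty) :
    ∃ t : Fin k, (b = .inr (.inl t) ∧ b' = .inr (.inr t)) ∨
      (b = .inr (.inr t) ∧ b' = .inr (.inl t)) := by
  obtain ⟨z, hz1, hz2⟩ := hz
  obtain ⟨hy1, hy2, hx⟩ := bund_inner_spec hz1
  obtain ⟨-, -, hx'⟩ := bund_inner_spec hz2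
  obtain ⟨c, f, hc, hf, hcase⟩ := bund_xcoords b
  obtain ⟨c', f', hc', hf', hcase'⟩ := bund_xcoords b'
  have heq : (c : ℝ) + (z.2 - 1) * (f : ℝ) = (c' : ℝ) + (z.2 - 1) * (f' : ℝ) := by
    rw [← hc, ← hf, ← hc', ← hf', ← hx, ← hx']
  set y : ℝ := z.2 - 1 with hy
  have hy0 : 0 < y := by simp [hy]; linarith
  have hy1' : y < 1 := by simp [hy]; linarith
  have key : (c = c' ∧ f = f') ∨
      (c' < c ∧ (c : ℤ) < c' + (f' - f)) ∨
      (c < c' ∧ (c' : ℤ) < c + (f - f')) := by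
    rcases lt_trichotomy f f' with hee | hee | hee
    · have heer : (f : ℝ) < (f' : ℝ) := by exact_mod_cast hee
      refine Or.inr (Or.inl ⟨?_, ?_⟩)
      · have : (c' : ℝ) < (c : ℝ) := by nlinarith
        exact_mod_cast this
      · have : (c : ℝ) < ((c' + (f' - f) : ℤ) : ℝ) := by push_cast; nlinarith
        exact_mod_cast this
    · subst hee
      refine Or.inl ⟨?_, rfl⟩
      have : (c : ℝ) = (c' : ℝ) := by nlinarith
      exact_mod_cast this
    · have heer : (f' : ℝ) < (f : ℝ) := by exact_mod_cast hee
      refine Or.inr (Or.inr ⟨?_, ?_⟩)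
      · have : (c : ℝ) < (c' : ℝ) := by nlinarith
        exact_mod_cast this
      · have : (c' : ℝ) < ((c + (f - f') : ℤ) : ℝ) := by push_cast; nlinarith
        exact_mod_cast this
  rcases hcase with ⟨hf0, s, rfl, hcs⟩ | ⟨hf0, t, rfl, hcs⟩ | ⟨hf0, t, rfl, hcs⟩ <;>
    rcases hcase' with ⟨hf0', s', rfl, hcs'⟩ | ⟨hf0', t', rfl, hcs'⟩ | ⟨hf0', t', rfl, hcs'⟩
  · exfalso
    have : s = s' := by
      have : s.val = s'.val := by omega
      exact Fin.ext this
    exact hne (by rw [this])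
  · exfalso; omega
  · exfalso; omega
  · exfalso; omega
  · exfalso
    have : t = t' := by
      have : t.val = t'.val := by omega
      exact Fin.ext this
    exact hne (by rw [this])
  · -- R t, L t' : partner case, t = t'
    have : t = t' := by
      have : t.val = t'.val := by omega
      exact Fin.ext this
    exact ⟨t, Or.inl ⟨rfl, by rw [this]⟩⟩
  · exfalso; omega
  · have : t = t' := by
      have : t.val = t'.val := by omega
      exact Fin.ext this
    exact ⟨t, Or.inr ⟨rfl, by rw [this]⟩⟩
  · exfalso
    have : t = t' := by
      have : t.val = t'.val := by omega
      exact Fin.ext this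
    exact hne (by rw [this])

def bAtF (hk : 1 ≤ k) : ∀ ⦃u v : VT k⦄, (chainK23 k).Adj u v → Option (BT k) :=
  fun u v _ =>
    match u, v with
    | .inl i, .inr j => some (eb hk i j)
    | .inl _, .inl _ => none
    | .inr _, .inl _ => none
    | .inr _, .inr _ => none

def midF (hk : 1 ≤ k) : ∀ ⦃u v : VT k⦄ (h : (chainK23 k).Adj u v),
    Path ((bAtF hk h).elim (posF u) termF) ((bAtF hk h.symm).elim (posF v) termF) :=
  fun u v h =>
    match u, v with
    | .inl i, .inr j => midSeg hk i j
    | .inl _, .inl _ => absurd h (chain_not_adj_ll _ _)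
    | .inr j, .inl i => (midSeg hk i j).symm
    | .inr _, .inr _ => absurd h (chain_not_adj_rr _ _)

example (hk : 1 ≤ k) (i : Fin (k+1)) (j : Fin (2*k+1)) (h : (chainK23 k).Adj (.inl i) (.inr j)) :
    midF hk h.symm = (midF hk h).symm := rfl


lemma midF_inner_snd (hk : 1 ≤ k) {u v : VT k} (h : (chainK23 k).Adj u v) {z : ℝ × ℝ}
    (hz : z ∈ pathInner (midF hk h)) : 0 < z.2 ∧ z.2 < 1 := by
  rcases u with i | j <;> rcases v with i' | j'
  · exact absurd h (chain_not_adj_ll _ _)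
  · obtain ⟨h1, h2⟩ := (chain_adj_iff hk i j').1 h
    obtain ⟨e, a, b, -, -⟩ := mid_inner_spec hk h1 h2 hz
    exact ⟨a, b⟩
  · change z ∈ pathInner (midSeg hk i' j).symm at hz
    rw [path_symm_inner] at hz
    obtain ⟨h1, h2⟩ := (chain_adj_iff hk i' j).1 h.symm
    obtain ⟨e, a, b, -, -⟩ := mid_inner_spec hk h1 h2 hz
    exact ⟨a, b⟩
  · exact absurd h (chain_not_adj_rr _ _)

lemma segP_range_snd {p q z : ℝ × ℝ} (hz : z ∈ Set.range ⇑(segP p q)) :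
    min p.2 q.2 ≤ z.2 ∧ z.2 ≤ max p.2 q.2 := by
  obtain ⟨t, ht0, ht1, -, hy⟩ := segP_range_coord hz
  constructor
  · rcases le_total p.2 q.2 with hle | hle <;> simp [min_def, max_def, hle] <;> nlinarith
  · rcases le_total p.2 q.2 with hle | hle <;> simp [min_def, max_def, hle] <;> nlinarith

lemma posF_inj : Function.Injective (posF (k := k)) := by
  rintro (i | j) (i' | j') h
  · simp only [posF, Prod.mk.injEq] at h
    have : i.val = i'.val := by exact_mod_cast (by linarith [h.1] : (i.val : ℝ) = i'.val)
    exact congrArg Sum.inl (Fin.ext this)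
  · exact absurd (congrArg Prod.snd h) (by norm_num [posF])
  · exact absurd (congrArg Prod.snd h) (by norm_num [posF])
  · simp only [posF, Prod.mk.injEq] at h
    have : j.val = j'.val := by exact_mod_cast (by linarith [h.1] : (j.val : ℝ) = j'.val)
    exact congrArg Sum.inr (Fin.ext this)

def theDrawing (hk : 1 ≤ k) : FanBundleDrawing (chainK23 k) (BT k) where
  pos := posF
  pos_inj := posF_inj
  anchor := anchorF
  term := termF
  bArc := bArcF
  bArc_inj := by
    intro b
    apply segP_inj
    intro hpq
    have := congrArg Prod.snd hpq
    rw [posF_anchor_snd, termF_snd] at this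
    norm_num at this
  bArc_avoid := by
    intro b w hw hz
    obtain ⟨t, ht0, ht1, hx, hy⟩ := segP_range_coord hz
    rw [posF_anchor_snd, termF_snd] at hy
    rcases w with i | j
    · have hw2 : (posF (k := k) (.inl i)).2 = 2 := rfl
      have ht : t = 0 := by rw [hw2] at hy; linarith
      apply hw
      apply posF_inj
      apply Prod.ext
      · rw [hx, ht]; ring_nf
      · rw [hw2, posF_anchor_snd]
    · have hw2 : (posF (k := k) (.inr j)).2 = 0 := rfl
      rw [hw2] at hy; linarith
  bundleAt := bAtF hk
  bundleAt_anchor := by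
    rintro (i | j) (i' | j') h b hb
    · exact absurd h (chain_not_adj_ll _ _)
    · rw [show bAtF hk h = some (eb hk i j') from rfl, Option.some_inj] at hb
      rw [← hb, eb_anchor]
    · exact absurd hb (by simp [bAtF])
    · exact absurd h (chain_not_adj_rr _ _)
  bundle_used := by
    rintro (s | (t | t))
    · refine ⟨.inl s, .inr ⟨2 * s.val, by omega⟩, ?_, ?_⟩
      · refine (chain_adj_iff hk _ _).2 ?_
        show 2 * s.val ≤ 2 * s.val + 2 ∧ 2 * s.val ≤ 2 * s.val + 2
        omega
      · refine congrArg some ?_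
        unfold eb
        rw [if_pos rfl]
    · have htk := t.isLt
      refine ⟨.inl ⟨t.val, by omega⟩, .inr ⟨2 * t.val + 1, by omega⟩, ?_, ?_⟩
      · refine (chain_adj_iff hk _ _).2 ?_
        show 2 * t.val ≤ 2 * t.val + 1 + 2 ∧ 2 * t.val + 1 ≤ 2 * t.val + 2
        omega
      · refine congrArg some ?_
        unfold eb
        rw [if_neg (by show ¬ (2 * t.val + 1 = 2 * t.val); omega),
          if_pos (by show 2 * t.val < 2 * t.val + 1; omega)]
        refine congrArg (Sum.inr ∘ Sum.inl) (Fin.ext ?_)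
        show min t.val (k - 1) = t.val
        omega
    · have htk := t.isLt
      refine ⟨.inl ⟨t.val + 1, by omega⟩, .inr ⟨2 * t.val + 1, by omega⟩, ?_, ?_⟩
      · refine (chain_adj_iff hk _ _).2 ?_
        show 2 * (t.val + 1) ≤ 2 * t.val + 1 + 2 ∧ 2 * t.val + 1 ≤ 2 * (t.val + 1) + 2
        omega
      · refine congrArg some ?_
        unfold eb
        rw [if_neg (by show ¬ (2 * t.val + 1 = 2 * (t.val + 1)); omega),
          if_neg (by show ¬ (2 * (t.val + 1) < 2 * t.val + 1); omega)]
        refine congrArg (Sum.inr ∘ Sum.inr) (Fin.ext ?_)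
        show t.val + 1 - 1 = t.val
        omega
  mid := midF hk
  mid_symm := by
    rintro (i | j) (i' | j') h
    · exact absurd h (chain_not_adj_ll _ _)
    · rfl
    · exact (Path.symm_symm _).symm
    · exact absurd h (chain_not_adj_rr _ _)
  mid_inj := by
    rintro (i | j) (i' | j') h
    · exact absurd h (chain_not_adj_ll _ _)
    · apply segP_inj
      intro hpq
      have := congrArg Prod.snd hpq
      rw [termF_snd] at this
      exact absurd this (by norm_num [posF])
    · apply path_symm_inj
      apply segP_inj
      intro hpq
      have := congrArg Prod.snd hpq
      rw [termF_snd] at this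
      exact absurd this (by norm_num [posF])
    · exact absurd h (chain_not_adj_rr _ _)
  mid_avoid := by
    intro u v h w hz
    obtain ⟨h0, h1⟩ := midF_inner_snd hk h hz
    rcases w with i | j
    · have : (posF (k := k) (.inl i)).2 = 2 := rfl
      rw [this] at h0 h1; linarith
    · have : (posF (k := k) (.inr j)).2 = 0 := rfl
      rw [this] at h0 h1; linarith
  bundle_cross_at_most_one := by
    intro b b₁ b₂ h1 hn1 h2 hn2
    obtain ⟨t, ht⟩ := bundle_cross (Ne.symm h1) hn1
    obtain ⟨t', ht'⟩ := bundle_cross (Ne.symm h2) hn2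
    rcases ht with ⟨hb, hb1⟩ | ⟨hb, hb1⟩ <;> rcases ht' with ⟨hb', hb2⟩ | ⟨hb', hb2⟩
    · rw [hb1, hb2]
      rw [hb'] at hb
      simp only [Sum.inr.injEq, Sum.inl.injEq] at hb
      rw [hb]
    · exfalso; rw [hb'] at hb; simp at hb
    · exfalso; rw [hb'] at hb; simp at hb
    · rw [hb1, hb2]
      rw [hb'] at hb
      simp only [Sum.inr.injEq] at hb
      rw [hb]
  same_anchor_no_cross := by
    intro b b' hne hanch
    by_contra hcon
    obtain ⟨t, ht⟩ := bundle_cross hne (Set.nonempty_iff_ne_empty.2 hcon)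
    rcases ht with ⟨hb, hb'⟩ | ⟨hb, hb'⟩ <;> rw [hb, hb'] at hanch <;>
      simp only [anchorF, Sum.inl.injEq] at hanch <;>
      exact absurd (congrArg Fin.val hanch) (by simp)
  mid_no_cross_mid := by
    intro u v x y h h' hs
    rcases u with i | j <;> rcases v with i' | j'
    · exact absurd h (chain_not_adj_ll _ _)
    · rcases x with a | b <;> rcases y with a' | b'
      · exact absurd h' (chain_not_adj_ll _ _)
      · refine mids_disjoint hk ((chain_adj_iff hk i j').1 h).1 ((chain_adj_iff hk i j').1 h).2
          ((chain_adj_iff hk a b').1 h').1 ((chain_adj_iff hk a b').1 h').2 ?_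
        rintro ⟨rfl, rfl⟩
        exact hs rfl
      · change pathInner (midF hk h) ∩ pathInner (midSeg hk a' b).symm = ∅
        rw [path_symm_inner]
        refine mids_disjoint hk ((chain_adj_iff hk i j').1 h).1 ((chain_adj_iff hk i j').1 h).2
          ((chain_adj_iff hk a' b).1 h'.symm).1 ((chain_adj_iff hk a' b).1 h'.symm).2 ?_
        rintro ⟨rfl, rfl⟩
        exact hs (Sym2.eq_swap)
      · exact absurd h' (chain_not_adj_rr _ _)
    · rcases x with a | b <;> rcases y with a' | b'
      · exact absurd h' (chain_not_adj_ll _ _)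
      · change pathInner (midSeg hk i' j).symm ∩ pathInner (midF hk h') = ∅
        rw [path_symm_inner]
        refine mids_disjoint hk ((chain_adj_iff hk i' j).1 h.symm).1
          ((chain_adj_iff hk i' j).1 h.symm).2
          ((chain_adj_iff hk a b').1 h').1 ((chain_adj_iff hk a b').1 h').2 ?_
        rintro ⟨rfl, rfl⟩
        exact hs (Sym2.eq_swap)
      · change pathInner (midSeg hk i' j).symm ∩ pathInner (midSeg hk a' b).symm = ∅
        rw [path_symm_inner, path_symm_inner]
        refine mids_disjoint hk ((chain_adj_iff hk i' j).1 h.symm).1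
          ((chain_adj_iff hk i' j).1 h.symm).2
          ((chain_adj_iff hk a' b).1 h'.symm).1 ((chain_adj_iff hk a' b).1 h'.symm).2 ?_
        rintro ⟨rfl, rfl⟩
        exact hs rfl
      · exact absurd h' (chain_not_adj_rr _ _)
    · exact absurd h (chain_not_adj_rr _ _)
  mid_no_cross_bundle := by
    intro u v h b
    ext z
    simp only [Set.mem_inter_iff, Set.mem_empty_iff_false, iff_false, not_and]
    intro hz hz'
    obtain ⟨-, h1⟩ := midF_inner_snd hk h hz
    obtain ⟨h2, -, -⟩ := bund_inner_spec hz'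
    linarith

lemma midSeg_range_snd (hk : 1 ≤ k) {i : Fin (k + 1)} {j : Fin (2 * k + 1)} {z : ℝ × ℝ}
    (hz : z ∈ Set.range ⇑(midSeg hk i j)) : 0 ≤ z.2 ∧ z.2 ≤ 1 := by
  have hterm : termF (eb hk i j) = ((termF (eb hk i j)).1, 1) := by
    rw [← termF_snd (eb hk i j)]
  have hpos : posF (k := k) (.inr j) = (5 * (j.val : ℝ), 0) := rfl
  rw [midSeg, hterm, hpos] at hz
  have := segP_range_snd hz
  simp only [min_def, max_def] at this
  norm_num at this
  exact ⟨this.1, this.2⟩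

lemma theDrawing_oneSided (hk : 1 ≤ k) : (theDrawing hk).OneSided := by
  rintro (i | j) (i' | j') h
  · exact absurd h (chain_not_adj_ll _ _)
  · exact Or.inr ⟨rfl, by simp [theDrawing, bAtF]⟩
  · exact Or.inl ⟨rfl, by simp [theDrawing, bAtF]⟩
  · exact absurd h (chain_not_adj_rr _ _)

lemma theDrawing_twoLayer (hk : 1 ≤ k) : (theDrawing hk).TwoLayer := by
  refine ⟨0, 2, by norm_num, ?_, ?_, ?_⟩
  · rintro (i | j)
    · exact Or.inr rfl
    · exact Or.inl rfl
  · rintro (i | j) (i' | j') h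
    · exact absurd h (chain_not_adj_ll _ _)
    · show (2 : ℝ) ≠ 0; norm_num
    · show (0 : ℝ) ≠ 2; norm_num
    · exact absurd h (chain_not_adj_rr _ _)
  · rintro z hz
    rcases hz with (hz | hz) | hz
    · obtain ⟨w, rfl⟩ := hz
      rcases w with i | j
      · constructor <;> norm_num [theDrawing, posF]
      · constructor <;> norm_num [theDrawing, posF]
    · simp only [Set.mem_iUnion] at hz
      obtain ⟨b, hb⟩ := hz
      have hb' : z ∈ Set.range ⇑(bArcF b) := hb
      obtain ⟨t, ht0, ht1, -, hy⟩ := segP_range_coord hb'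
      rw [posF_anchor_snd, termF_snd] at hy
      constructor <;> (show _ ; rw [hy]) <;> nlinarith
    · simp only [Set.mem_iUnion] at hz
      obtain ⟨u, v, h, hb⟩ := hz
      have hrange : 0 ≤ z.2 ∧ z.2 ≤ 1 := by
        rcases u with i | j <;> rcases v with i' | j'
        · exact absurd h (chain_not_adj_ll _ _)
        · exact midSeg_range_snd hk hb
        · have : z ∈ Set.range ⇑(midSeg hk i' j) := by
            rw [← path_symm_range]
            exact hb
          exact midSeg_range_snd hk this
        · exact absurd h (chain_not_adj_rr _ _)
      exact ⟨hrange.1, by linarith [hrange.2]⟩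

lemma chain_edgeSet (hk : 1 ≤ k) : (chainK23 k).edgeSet =
    (fun p : Fin (k + 1) × Fin (2 * k + 1) => s(Sum.inl p.1, Sum.inr p.2)) ''
      {p : Fin (k + 1) × Fin (2 * k + 1) | 2 * p.1.val ≤ p.2.val + 2 ∧ p.2.val ≤ 2 * p.1.val + 2} := by
  ext e
  induction e with
  | _ u v =>
    simp only [SimpleGraph.mem_edgeSet, Set.mem_image, Set.mem_setOf_eq]
    constructor
    · intro h
      rcases u with i | j <;> rcases v with i' | j'
      · exact absurd h (chain_not_adj_ll _ _)
      · exact ⟨(i, j'), (chain_adj_iff hk i j').1 h, rfl⟩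
      · exact ⟨(i', j), (chain_adj_iff hk i' j).1 h.symm, Sym2.eq_swap⟩
      · exact absurd h (chain_not_adj_rr _ _)
    · rintro ⟨⟨i, j⟩, hp, he⟩
      have hadj := (chain_adj_iff hk i j).2 hp
      simp only at he
      rcases Sym2.eq_iff.1 he with ⟨rfl, rfl⟩ | ⟨rfl, rfl⟩
      · exact hadj
      · exact hadj.symm

lemma count_inner (hk : 1 ≤ k) (i : Fin (k + 1)) :
    (Finset.univ.filter fun j : Fin (2 * k + 1) =>
        2 * i.val ≤ j.val + 2 ∧ j.val ≤ 2 * i.val + 2).card =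
      if i.val = 0 then 3 else if i.val = k then 3 else 5 := by
  have himg : (Finset.univ.filter fun j : Fin (2 * k + 1) =>
        2 * i.val ≤ j.val + 2 ∧ j.val ≤ 2 * i.val + 2).image Fin.val =
      (Finset.range (2 * k + 1)).filter fun m => 2 * i.val ≤ m + 2 ∧ m ≤ 2 * i.val + 2 := by
    ext m
    simp only [Finset.mem_image, Finset.mem_filter, Finset.mem_univ, true_and,
      Finset.mem_range]
    constructor
    · rintro ⟨j, hj, rfl⟩
      exact ⟨j.isLt, hj⟩
    · rintro ⟨hm, hj⟩
      exact ⟨⟨m, hm⟩, hj, rfl⟩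
  have hcard := Finset.card_image_of_injective
    (Finset.univ.filter fun j : Fin (2 * k + 1) =>
      2 * i.val ≤ j.val + 2 ∧ j.val ≤ 2 * i.val + 2) Fin.val_injective
  rw [himg] at hcard
  rw [← hcard]
  have hi := i.isLt
  rcases Nat.eq_or_lt_of_le (Nat.zero_le i.val) with h0 | h0
  · rw [if_pos h0.symm]
    have : (Finset.range (2 * k + 1)).filter
        (fun m => 2 * i.val ≤ m + 2 ∧ m ≤ 2 * i.val + 2) = Finset.range 3 := by
      ext m
      simp only [Finset.mem_filter, Finset.mem_range]
      omega
    rw [this, Finset.card_range]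
  · rw [if_neg (by omega)]
    rcases Nat.eq_or_lt_of_le (by omega : i.val ≤ k) with hk' | hk'
    · rw [if_pos hk']
      have : (Finset.range (2 * k + 1)).filter
          (fun m => 2 * i.val ≤ m + 2 ∧ m ≤ 2 * i.val + 2) =
          Finset.Icc (2 * k - 2) (2 * k) := by
        ext m
        simp only [Finset.mem_filter, Finset.mem_range, Finset.mem_Icc]
        omega
      rw [this, Nat.card_Icc]
      omega
    · rw [if_neg (by omega)]
      have : (Finset.range (2 * k + 1)).filter
          (fun m => 2 * i.val ≤ m + 2 ∧ m ≤ 2 * i.val + 2) =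
          Finset.Icc (2 * i.val - 2) (2 * i.val + 2) := by
        ext m
        simp only [Finset.mem_filter, Finset.mem_range, Finset.mem_Icc]
        omega
      rw [this, Nat.card_Icc]
      omega

lemma chain_edge_count (hk : 1 ≤ k) : (chainK23 k).edgeSet.ncard = 5 * k + 1 := by
  rw [chain_edgeSet hk]
  rw [Set.ncard_image_of_injOn]
  · have hset : {p : Fin (k + 1) × Fin (2 * k + 1) |
        2 * p.1.val ≤ p.2.val + 2 ∧ p.2.val ≤ 2 * p.1.val + 2} =
        ↑(Finset.univ.filter fun p : Fin (k + 1) × Fin (2 * k + 1) =>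
          2 * p.1.val ≤ p.2.val + 2 ∧ p.2.val ≤ 2 * p.1.val + 2) := by
      ext p
      simp
    rw [hset, Set.ncard_coe_finset]
    have hsum : (Finset.univ.filter fun p : Fin (k + 1) × Fin (2 * k + 1) =>
        2 * p.1.val ≤ p.2.val + 2 ∧ p.2.val ≤ 2 * p.1.val + 2).card =
        ∑ i : Fin (k + 1), (Finset.univ.filter fun j : Fin (2 * k + 1) =>
          2 * i.val ≤ j.val + 2 ∧ j.val ≤ 2 * i.val + 2).card := by
      simp only [Finset.card_filter]
      rw [Fintype.sum_prod_type]
    rw [hsum]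
    have hcongr : ∀ i : Fin (k + 1), (Finset.univ.filter fun j : Fin (2 * k + 1) =>
        2 * i.val ≤ j.val + 2 ∧ j.val ≤ 2 * i.val + 2).card =
        (if i.val = 0 then 3 else if i.val = k then 3 else 5) := count_inner hk
    rw [Finset.sum_congr rfl fun i _ => hcongr i]
    rw [Fin.sum_univ_eq_sum_range (fun m => if m = 0 then 3 else if m = k then 3 else 5)]
    have hdecomp : Finset.range (k + 1) = insert 0 (insert k (Finset.Ico 1 k)) := by
      ext m
      simp only [Finset.mem_range, Finset.mem_insert, Finset.mem_Ico]
      omega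
    rw [hdecomp, Finset.sum_insert (by simp [Finset.mem_Ico]; omega),
      Finset.sum_insert (by simp [Finset.mem_Ico])]
    have hconst : ∀ m ∈ Finset.Ico 1 k,
        (if m = 0 then 3 else if m = k then 3 else 5) = 5 := by
      intro m hm
      simp only [Finset.mem_Ico] at hm
      rw [if_neg (by omega), if_neg (by omega)]
    rw [Finset.sum_congr rfl hconst, Finset.sum_const, Nat.card_Ico, smul_eq_mul]
    have h0 : (if (0 : ℕ) = 0 then 3 else if (0 : ℕ) = k then 3 else 5) = 3 := by simp
    have hkk : (if k = 0 then 3 else if k = k then 3 else 5) = 3 := by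
      rw [if_neg (by omega), if_pos rfl]
    rw [h0, hkk]
    omega
  · rintro ⟨i, j⟩ - ⟨i', j'⟩ - he
    simp only [Sym2.eq, Sym2.rel_iff', Prod.mk.injEq, Sum.inl.injEq, Sum.inr.injEq,
      Prod.swap_prod_mk] at he
    rcases he with ⟨h1, h2⟩ | ⟨h1, h2⟩
    · exact Prod.ext h1 h2
    · exact absurd h1 (by simp)

end ChainAux

/-- For every positive integer `k`, the graph obtained by chaining `k`
copies of `K_{2,3}` so that consecutive copies share an edge is a 1-sided 2-layer
fan-bundle-planar bipartite graph with `n = 3k+2` vertices and exactly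
`(5n−7)/3 = 5k+1` edges. -/
theorem chainK23_two_layer (k : ℕ) (hk : 1 ≤ k) :
    Fintype.card (Fin (k + 1) ⊕ Fin (2 * k + 1)) = 3 * k + 2 ∧
    OneSidedTwoLayerFanBundlePlanar (chainK23 k) ∧
    (chainK23 k).edgeSet.ncard = 5 * k + 1 := by
  refine ⟨?_, ⟨BT k, theDrawing hk, theDrawing_oneSided hk, theDrawing_twoLayer hk⟩,
    chain_edge_count hk⟩
  simp only [Fintype.card_sum, Fintype.card_fin]
  omega
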